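/- Let (X, ≤) be a chain-complete partially ordered set and let f : X → X be chain-continuous. Then f preserves least upper bounds of nonempty directed sets: for every nonempty subset D ⊆ X that is directed with respect to ≤ and every x that is a least upper bound of D, f x is a least upper bound of the image f '' D. -/

import Mathlib

open Cardinal Set

namespace Stmt10Aux

variable {X : Type*} [PartialOrder X]

/-- Chain-continuous maps are monotone. -/
lemma mono_of_chainCont (f : X → X)
    (hcont : ∀ C : Set X, C.Nonempty → IsChain (· ≤ ·) C →
      ∀ x, IsLUB C x → IsLUB (f '' C) (f x)) :
    Monotone f := by
  intro a b hab
  have hch : IsChain (· ≤ ·) ({a, b} : Set X) := by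
    rintro x (rfl | rfl) y (rfl | rfl) _ <;> simp [hab]
  have hlub : IsLUB ({a, b} : Set X) b := by
    constructor
    · rintro y (rfl | rfl)
      · exact hab
      · exact le_rfl
    · intro u hu
      exact hu (by simp)
  exact (hcont _ ⟨a, by simp⟩ hch b hlub).1 ⟨a, by simp, rfl⟩

/-- Iic has small cardinality in `κ.ord.ToType`. -/
lemma mk_Iic_lt (κ : Cardinal) (hκ : ℵ₀ < κ) (i : κ.ord.ToType) : #(Iic i) < κ := by
  have h1 : #(Iio i) < κ :=
    lt_of_eq_of_lt (@Ordinal.card_typein κ.ord.ToType (· < ·) (@isWellOrder_lt _ _ _) i)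
      (Cardinal.card_typein_toType_lt κ i)
  have hsub : (Iic i : Set κ.ord.ToType) ⊆ insert i (Iio i) := fun y hy => by
    rcases eq_or_lt_of_le (mem_Iic.mp hy) with h | h
    · exact Or.inl h
    · exact Or.inr h
  calc #(Iic i) ≤ #(insert i (Iio i) : Set _) := mk_le_mk_of_subset hsub
    _ ≤ #(Iio i) + 1 := mk_insert_le
    _ < κ := Cardinal.add_lt_of_lt hκ.le h1 (lt_trans one_lt_aleph0 hκ)

universe u

/-- The key lemma, proved by induction on the cardinality of `D`. -/
lemma key {X : Type u} [PartialOrder X] (hcc : ∀ C : Set X, IsChain (· ≤ ·) C → ∃ s, IsLUB C s)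
    (f : X → X)
    (hcont : ∀ C : Set X, C.Nonempty → IsChain (· ≤ ·) C →
      ∀ x, IsLUB C x → IsLUB (f '' C) (f x)) :
    ∀ (κ : Cardinal) (D : Set X), #D = κ → D.Nonempty → DirectedOn (· ≤ ·) D →
      ∃ s, IsLUB D s ∧ IsLUB (f '' D) (f s) := by
  have hmono : Monotone f := mono_of_chainCont f hcont
  intro κ
  induction κ using WellFoundedLT.induction with
  | _ κ IH =>
  intro D hκD hne hdir
  classical
  -- upper bound choice function
  set g : X → X → X := fun a b =>
    if h : a ∈ D ∧ b ∈ D then (hdir a h.1 b h.2).choose else a with hg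
  have hgspec : ∀ a ∈ D, ∀ b ∈ D, g a b ∈ D ∧ a ≤ g a b ∧ b ≤ g a b := by
    intro a ha b hb
    have h : a ∈ D ∧ b ∈ D := ⟨ha, hb⟩
    rw [hg]
    simp only [dif_pos h]
    obtain ⟨hz, h1, h2⟩ := (hdir a h.1 b h.2).choose_spec
    exact ⟨hz, h1, h2⟩
  by_cases hco : Countable D
  · -- countable case: build a cofinal increasing sequence
    haveI : Nonempty ↥D := hne.to_subtype
    haveI : Countable ↥D := hco
    obtain ⟨d, hd⟩ := exists_surjective_nat (↥D)
    let c : ℕ → X := fun n => Nat.rec ((d 0 : X)) (fun n cn => g cn (d (n + 1))) n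
    have hc0 : c 0 = (d 0 : X) := rfl
    have hcs : ∀ n, c (n + 1) = g (c n) (d (n + 1)) := fun n => rfl
    have hcD : ∀ n, c n ∈ D := by
      intro n
      induction n with
      | zero => exact (d 0).2
      | succ n ih => rw [hcs]; exact (hgspec _ ih _ (d (n + 1)).2).1
    have hstep : ∀ n, c n ≤ c (n + 1) := by
      intro n
      rw [hcs]
      exact (hgspec _ (hcD n) _ (d (n + 1)).2).2.1
    have hcmono : Monotone c := monotone_nat_of_le_succ hstep
    have hdc : ∀ n, (d n : X) ≤ c n := by
      intro n
      cases n with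
      | zero => exact le_of_eq hc0.symm
      | succ n => rw [hcs]; exact (hgspec _ (hcD n) _ (d (n + 1)).2).2.2
    have hchain : IsChain (· ≤ ·) (range c) := by
      rintro _ ⟨m, rfl⟩ _ ⟨n, rfl⟩ _
      rcases le_total m n with h | h
      · exact Or.inl (hcmono h)
      · exact Or.inr (hcmono h)
    obtain ⟨s, hs⟩ := hcc (range c) hchain
    have hDs : IsLUB D s := by
      constructor
      · intro y hy
        obtain ⟨n, hn⟩ := hd ⟨y, hy⟩
        have : y = (d n : X) := by rw [hn]
        rw [this]
        exact le_trans (hdc n) (hs.1 ⟨n, rfl⟩)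
      · intro u hu
        exact hs.2 (by rintro _ ⟨n, rfl⟩; exact hu (hcD n))
    have hfs := hcont (range c) ⟨c 0, ⟨0, rfl⟩⟩ hchain s hs
    refine ⟨s, hDs, ?_, ?_⟩
    · rintro _ ⟨y, hy, rfl⟩
      obtain ⟨n, hn⟩ := hd ⟨y, hy⟩
      have hyd : y = (d n : X) := by rw [hn]
      calc f y ≤ f (c n) := hmono (hyd ▸ hdc n)
        _ ≤ f s := hfs.1 ⟨c n, ⟨n, rfl⟩, rfl⟩
    · intro u hu
      refine hfs.2 ?_
      rintro _ ⟨_, ⟨n, rfl⟩, rfl⟩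
      exact hu ⟨c n, hcD n, rfl⟩
  · -- uncountable case
    have hκ : ℵ₀ < #D := by
      rw [← not_le]
      intro h
      exact hco (mk_le_aleph0_iff.mp h)
    -- index type
    set T := (#D).ord.ToType with hT
    have hTeq : #T = #D := Cardinal.mk_ord_toType _
    obtain ⟨e⟩ : Nonempty (T ≃ ↥D) := Cardinal.eq.mp hTeq
    -- closure operator
    set step : Set X → Set X := fun S => S ∪ (fun p : X × X => g p.1 p.2) '' (S ×ˢ S) with hstepdef
    set cl : Set X → Set X := fun S => ⋃ n : ULift.{u} ℕ, step^[n.down] S with hcldef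
    have hstep_sub : ∀ S : Set X, S ⊆ step S := fun S => subset_union_left
    have hstep_mono : ∀ S S' : Set X, S ⊆ S' → step S ⊆ step S' := by
      intro S S' h
      exact union_subset_union h (image_mono (prod_mono h h))
    have hiter_mono : ∀ n, ∀ S S' : Set X, S ⊆ S' → step^[n] S ⊆ step^[n] S' := by
      intro n
      induction n with
      | zero => intro S S' h; simpa using h
      | succ n ih =>
        intro S S' h
        rw [Function.iterate_succ_apply', Function.iterate_succ_apply']
        exact hstep_mono _ _ (ih _ _ h)
    have hiter_incl : ∀ n, ∀ S : Set X, S ⊆ step^[n] S := by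
      intro n
      induction n with
      | zero => intro S; simp
      | succ n ih =>
        intro S
        rw [Function.iterate_succ_apply']
        exact (ih S).trans ((hstep_sub _))
    have hcl_incl : ∀ S : Set X, S ⊆ cl S := fun S =>
      (subset_iUnion (fun n : ULift.{u} ℕ => step^[n.down] S) ⟨0⟩).trans' (by simp)
    have hcl_mono : ∀ S S' : Set X, S ⊆ S' → cl S ⊆ cl S' := by
      intro S S' h
      exact iUnion_mono fun n => hiter_mono n.down _ _ h
    have hstep_subD : ∀ S : Set X, S ⊆ D → step S ⊆ D := by
      intro S hS
      rintro x (hx | ⟨⟨a, b⟩, ⟨ha, hb⟩, rfl⟩)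
      · exact hS hx
      · exact (hgspec a (hS ha) b (hS hb)).1
    have hiter_subD : ∀ n, ∀ S : Set X, S ⊆ D → step^[n] S ⊆ D := by
      intro n
      induction n with
      | zero => intro S h; simpa using h
      | succ n ih =>
        intro S h
        rw [Function.iterate_succ_apply']
        exact hstep_subD _ (ih _ h)
    have hcl_subD : ∀ S : Set X, S ⊆ D → cl S ⊆ D := by
      intro S h
      exact iUnion_subset fun n => hiter_subD n.down _ h
    have hcl_dir : ∀ S : Set X, S ⊆ D → DirectedOn (· ≤ ·) (cl S) := by
      intro S hS a ha b hb
      obtain ⟨n, hn⟩ := mem_iUnion.mp ha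
      obtain ⟨m, hm⟩ := mem_iUnion.mp hb
      have hmono2 : ∀ k l, k ≤ l → (step^[k] S : Set X) ⊆ step^[l] S := by
        intro k l hkl
        obtain ⟨j, rfl⟩ := Nat.exists_eq_add_of_le hkl
        rw [Nat.add_comm, Function.iterate_add_apply]
        exact hiter_incl j _
      have ha' : a ∈ step^[max n.down m.down] S := hmono2 n.down _ (le_max_left _ _) hn
      have hb' : b ∈ step^[max n.down m.down] S := hmono2 m.down _ (le_max_right _ _) hm
      have haD : a ∈ D := hiter_subD _ _ hS ha'
      have hbD : b ∈ D := hiter_subD _ _ hS hb'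
      refine ⟨g a b, ?_, (hgspec a haD b hbD).2.1, (hgspec a haD b hbD).2.2⟩
      apply mem_iUnion.mpr ⟨⟨max n.down m.down + 1⟩, ?_⟩
      rw [Function.iterate_succ_apply']
      exact Or.inr ⟨(a, b), ⟨ha', hb'⟩, rfl⟩
    -- cardinality of the closure
    have hstep_card : ∀ (S : Set X) (m : Cardinal), ℵ₀ ≤ m → #S ≤ m → #(step S) ≤ m := by
      intro S m hm hSm
      have h1 : #(↥(S ×ˢ S)) = #S * #S := by
        rw [Cardinal.mk_congr (Equiv.Set.prod S S)]; simp
      calc #(step S) ≤ #S + #((fun p : X × X => g p.1 p.2) '' (S ×ˢ S)) :=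
            mk_union_le _ _
        _ ≤ #S + #(↥(S ×ˢ S)) := by gcongr; exact mk_image_le
        _ = #S + #S * #S := by rw [h1]
        _ ≤ m + m * m := by gcongr
        _ = m := by rw [Cardinal.mul_eq_self hm, Cardinal.add_eq_self hm]
    have hiter_card : ∀ (n : ℕ) (S : Set X) (m : Cardinal), ℵ₀ ≤ m → #S ≤ m →
        #(step^[n] S) ≤ m := by
      intro n
      induction n with
      | zero => intro S m _ h; simpa using h
      | succ n ih =>
        intro S m hm h
        rw [Function.iterate_succ_apply']
        exact hstep_card _ m hm (ih S m hm h)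
    have hcl_card : ∀ (S : Set X) (m : Cardinal), ℵ₀ ≤ m → #S ≤ m → #(cl S) ≤ m := by
      intro S m hm hSm
      calc #(cl S) ≤ #(ULift.{u} ℕ) * ⨆ n : ULift.{u} ℕ, #(step^[n.down] S) :=
            Cardinal.mk_iUnion_le _
        _ ≤ ℵ₀ * m := by
            gcongr
            · simp
            · exact ciSup_le' fun n => hiter_card n.down S m hm hSm
        _ ≤ m * m := by gcongr
        _ = m := Cardinal.mul_eq_self hm
    -- the directed family
    set B : T → Set X := fun i => (fun j => ((e j : ↥D) : X)) '' Iic i with hB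
    set A : T → Set X := fun i => cl (B i) with hA
    have hB_subD : ∀ i, B i ⊆ D := by rintro i _ ⟨j, _, rfl⟩; exact (e j).2
    have hA_subD : ∀ i, A i ⊆ D := fun i => hcl_subD _ (hB_subD i)
    have hA_ne : ∀ i, (A i).Nonempty := fun i =>
      ⟨(e i : X), hcl_incl _ ⟨i, mem_Iic.mpr le_rfl, rfl⟩⟩
    have hA_dir : ∀ i, DirectedOn (· ≤ ·) (A i) := fun i => hcl_dir _ (hB_subD i)
    have hA_card : ∀ i, #(A i) < #D := by
      intro i
      have h1 : #(B i) < #D := lt_of_le_of_lt mk_image_le (mk_Iic_lt (#D) hκ i)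
      have h2 : max (#(B i)) ℵ₀ < #D := max_lt h1 hκ
      exact lt_of_le_of_lt
        (hcl_card _ _ (le_max_right _ _) (le_max_left _ _)) h2
    have hA_mono : ∀ i j : T, i ≤ j → A i ⊆ A j := by
      intro i j hij
      exact hcl_mono _ _ (image_mono (Iic_subset_Iic.mpr hij))
    have hB_cover : ∀ y ∈ D, ∃ i, y ∈ B i := by
      intro y hy
      refine ⟨e.symm ⟨y, hy⟩, e.symm ⟨y, hy⟩, mem_Iic.mpr le_rfl, ?_⟩
      simp
    -- apply the induction hypothesis to each A i
    have hIH : ∀ i : T, ∃ s, IsLUB (A i) s ∧ IsLUB (f '' A i) (f s) := by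
      intro i
      exact IH (#(A i)) (hκD ▸ hA_card i) (A i) rfl (hA_ne i) (hA_dir i)
    choose s hs1 hs2 using hIH
    have hsmono : Monotone s := by
      intro i j hij
      exact (hs1 i).2 fun y hy => (hs1 j).1 (hA_mono i j hij hy)
    have hschain : IsChain (· ≤ ·) (range s) := by
      rintro _ ⟨i, rfl⟩ _ ⟨j, rfl⟩ _
      rcases le_total i j with h | h
      · exact Or.inl (hsmono h)
      · exact Or.inr (hsmono h)
    obtain ⟨t, ht⟩ := hcc (range s) hschain
    have hTne : Nonempty T := by
      rw [hT]
      rw [Ordinal.toType_nonempty_iff_ne_zero]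
      intro h0
      have : (#D : Cardinal) = 0 := by
        have := Cardinal.card_ord (#D)
        rw [h0] at this
        simpa using this.symm
      rw [Cardinal.mk_eq_zero_iff] at this
      exact this.false ⟨hne.choose, hne.choose_spec⟩
    obtain ⟨i0⟩ := hTne
    have hDt : IsLUB D t := by
      constructor
      · intro y hy
        obtain ⟨i, hi⟩ := hB_cover y hy
        have h1 : y ≤ s i := (hs1 i).1 (hcl_incl _ hi)
        exact h1.trans (ht.1 ⟨i, rfl⟩)
      · intro u hu
        refine ht.2 ?_
        rintro _ ⟨i, rfl⟩
        exact (hs1 i).2 fun y hy => hu (hA_subD i hy)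
    have hft := hcont (range s) ⟨s i0, ⟨i0, rfl⟩⟩ hschain t ht
    refine ⟨t, hDt, ?_, ?_⟩
    · rintro _ ⟨y, hy, rfl⟩
      obtain ⟨i, hi⟩ := hB_cover y hy
      have h1 : f y ≤ f (s i) := (hs2 i).1 ⟨y, hcl_incl _ hi, rfl⟩
      exact h1.trans (hft.1 ⟨s i, ⟨i, rfl⟩, rfl⟩)
    · intro u hu
      refine hft.2 ?_
      rintro _ ⟨_, ⟨i, rfl⟩, rfl⟩
      exact (hs2 i).2 fun y hy => by
        obtain ⟨z, hz, rfl⟩ := hy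
        exact hu ⟨z, hA_subD i hz, rfl⟩

end Stmt10Aux

/-- In a chain-complete poset, a chain-continuous map preserves least
upper bounds of nonempty directed sets. -/
theorem stmt_10 {X : Type*} [PartialOrder X]
    (hcc : ∀ C : Set X, IsChain (· ≤ ·) C → ∃ s, IsLUB C s)
    (f : X → X)
    (hcont : ∀ C : Set X, C.Nonempty → IsChain (· ≤ ·) C →
      ∀ x, IsLUB C x → IsLUB (f '' C) (f x)) :
    ∀ D : Set X, D.Nonempty → DirectedOn (· ≤ ·) D →
      ∀ x, IsLUB D x → IsLUB (f '' D) (f x) := by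
  intro D hne hdir x hx
  obtain ⟨s, hsD, hsf⟩ := Stmt10Aux.key hcc f hcont (#D) D rfl hne hdir
  rwa [hsD.unique hx] at hsf
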